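/- In ℂ_{0,b;q}[x,y] one has the symmetric normal-ordering expansion (x+y)^n = Σ_{k=0}^n [(q;q)_n/((q;q)_k(q;q)_{n-k})] · [(bq;q)_n/((bq;q)_k(bq;q)_{n-k})] · q^{k(k-n)} y^k x^{n-k}. -/

import Mathlib

/-- The `q`-shifted factorial `(a;q)_n = ∏_{j=0}^{n-1} (1 - a q^j)`. -/
def qPoch {K : Type*} [Field K] (a q : K) (n : ℕ) : K :=
  ∏ j ∈ Finset.range n, (1 - a * q ^ j)

namespace Stmt9

variable {K : Type*} [Field K]

lemma qPoch_zero (a q : K) : qPoch a q 0 = 1 := by simp [qPoch]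

lemma qPoch_succ (a q : K) (n : ℕ) : qPoch a q (n + 1) = qPoch a q n * (1 - a * q ^ n) :=
  Finset.prod_range_succ _ _

lemma map_qPoch (f : K →+* K) (a q : K) (n : ℕ) :
    f (qPoch a q n) = qPoch (f a) (f q) n := by
  unfold qPoch
  rw [map_prod]
  simp

lemma qPoch_add (a q : K) (m n : ℕ) :
    qPoch a q (m + n) = qPoch a q m * qPoch (a * q ^ m) q n := by
  unfold qPoch
  rw [Finset.prod_range_add]
  congr 1
  apply Finset.prod_congr rfl
  intro j _
  rw [pow_add]; ring

/-- The coefficient in the expansion. -/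
def qc (b q : K) (n k : ℕ) : K :=
  qPoch q q n / (qPoch q q k * qPoch q q (n - k)) *
    (qPoch (b * q) q n / (qPoch (b * q) q k * qPoch (b * q) q (n - k))) *
    q ^ ((k : ℤ) * ((k : ℤ) - (n : ℤ)))

/-- The commutation factor: `x y^k = ι (Bf k) y^k x`. -/
def Bf (b q : K) (k : ℕ) : K :=
  (q ^ k)⁻¹ * ((1 - b * q ^ (k + 1)) * (1 - b * q ^ (k + 2)) / ((1 - b * q) * (1 - b * q ^ 2)))

section Scalars

variable (b q : K) (hq0 : q ≠ 0) (hq1 : ∀ m : ℕ, q ^ (m + 1) ≠ 1)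
  (hbq : ∀ m : ℤ, 1 - b * q ^ m ≠ 0)

include hbq in
lemma hbqn : ∀ m : ℕ, (1 : K) - b * q ^ m ≠ 0 := by
  intro m
  have := hbq (m : ℤ)
  rwa [zpow_natCast] at this

include hq1 in
lemma hqs : ∀ m : ℕ, (1 : K) - q ^ (m + 1) ≠ 0 := fun m => sub_ne_zero_of_ne (hq1 m).symm

include hq1 in
lemma hP : ∀ n : ℕ, qPoch q q n ≠ 0 := by
  intro n
  unfold qPoch
  rw [Finset.prod_ne_zero_iff]
  intro j _
  rw [← pow_succ']
  exact hqs q hq1 j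

include hbq in
lemma hQ : ∀ n : ℕ, qPoch (b * q) q n ≠ 0 := by
  intro n
  unfold qPoch
  rw [Finset.prod_ne_zero_iff]
  intro j _
  rw [mul_assoc, ← pow_succ']
  exact hbqn b q hbq (j + 1)

include hbq in
lemma Q2_eq (n : ℕ) : qPoch (b * q ^ 2) q n = qPoch (b * q) q (n + 1) / (1 - b * q) := by
  rw [show n + 1 = 1 + n by omega, qPoch_add]
  have h1 : qPoch (b * q) q 1 = 1 - b * q := by simp [qPoch]
  have h2 : b * q * q ^ 1 = b * q ^ 2 := by ring
  rw [h1, h2, mul_div_cancel_left₀]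
  have := hbqn b q hbq 1
  rwa [pow_one] at this

include hbq in
lemma Q3_eq (n : ℕ) :
    qPoch (b * q ^ 3) q n = qPoch (b * q) q (n + 2) / ((1 - b * q) * (1 - b * q ^ 2)) := by
  rw [show n + 2 = 2 + n by omega, qPoch_add]
  have h1 : qPoch (b * q) q 2 = (1 - b * q) * (1 - b * q ^ 2) := by
    rw [qPoch, Finset.prod_range_succ, Finset.prod_range_one]
    ring
  have h2 : b * q * q ^ 2 = b * q ^ 3 := by ring
  rw [h1, h2, mul_div_cancel_left₀]
  apply mul_ne_zero
  · have := hbqn b q hbq 1; rwa [pow_one] at this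
  · exact hbqn b q hbq 2

end Scalars


section Scalars2

variable (b q : K) (hq0 : q ≠ 0) (hq1 : ∀ m : ℕ, q ^ (m + 1) ≠ 1)
  (hbq : ∀ m : ℤ, 1 - b * q ^ m ≠ 0)

include hq1 hbq in
lemma qc_zero (n : ℕ) : qc b q n 0 = 1 := by
  unfold qc
  rw [Nat.sub_zero, qPoch_zero, qPoch_zero, one_mul, one_mul,
    div_self (hP q hq1 n), div_self (hQ b q hbq n)]
  simp

include hq1 hbq in
lemma qc_self (n : ℕ) : qc b q n n = 1 := by
  unfold qc
  rw [Nat.sub_self, qPoch_zero, qPoch_zero, mul_one, mul_one,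
    div_self (hP q hq1 n), div_self (hQ b q hbq n)]
  simp

include hq0 hbq in
lemma Bf_succ (τ : K →+* K) (hτb : τ b = b * q) (hτq : τ q = q) (k : ℕ) :
    Bf b q (k + 1) = (q * (1 - b * q) / (1 - b * q ^ 3))⁻¹ * τ (Bf b q k) := by
  have e : τ (Bf b q k) = (q ^ k)⁻¹ *
      ((1 - b * q * q ^ (k + 1)) * (1 - b * q * q ^ (k + 2)) /
        ((1 - b * q * q) * (1 - b * q * q ^ 2))) := by
    simp [Bf, map_mul, map_inv₀, map_div₀, map_sub, map_pow, map_one, hτb, hτq, mul_assoc]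
  rw [e, Bf]
  have h1 : (1 : K) - b * q ≠ 0 := by have := hbqn b q hbq 1; rwa [pow_one] at this
  have h2 : (1 : K) - b * q ^ 2 ≠ 0 := hbqn b q hbq 2
  have h3 : (1 : K) - b * q ^ 3 ≠ 0 := hbqn b q hbq 3
  have h2' : (1 : K) - b * q * q ≠ 0 := by
    rw [mul_assoc, ← pow_two]; exact h2
  have h3' : (1 : K) - b * q * q ^ 2 ≠ 0 := by
    rw [mul_assoc, ← pow_succ']; exact h3
  field_simp
  ring


set_option maxHeartbeats 1000000 in
lemma key_e0 {K : Type*} [Field K] (b q A1 A2 A3 A4 A5 A6 : K) (j m : ℕ)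
    (hq0 : q ≠ 0) (h1 : A1 ≠ 0) (h2 : A2 ≠ 0) (h4 : A4 ≠ 0) (h5 : A5 ≠ 0)
    (B0 : 1 - q * q ^ j ≠ 0) (B1 : 1 - q * q ^ m ≠ 0)
    (C0 : 1 - b * q * q ^ j ≠ 0) (C3 : 1 - b * q * q ^ m ≠ 0)
    (C4 : 1 - b * q * q ^ (m + 1) ≠ 0) :
    A3 * (1 - q * q ^ (j + m)) * (1 - q * q ^ (j + m + 1)) / (A1 * (1 - q * q ^ j) * (A2 * (1 - q * q ^ m))) * (A6 * (1 - b * q * q ^ (j + m)) * (1 - b * q * q ^ (j + m + 1)) / (A4 * (1 - b * q * q ^ j) * (A5 * (1 - b * q * q ^ m)))) * (q ^ ((j + 1) * (m + 1)))⁻¹ = (1 - q * q ^ (j + m + 1)) * ((1 - b * q * q ^ (m + 1)) * (A3 * (1 - q * q ^ (j + m)) * (A6 * (1 - b * q * q ^ (j + m)) * (1 - b * q * q ^ (j + m + 1))) * (q ^ ((j + 1) * (m + 1)))⁻¹ / (A1 * (1 - q * q ^ j) * A2 * (1 - q * q ^ m) * A4 * (1 - b * q * q ^ j) * A5 * (1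 - b * q * q ^ m) * (1 - b * q * q ^ (m + 1))))) := by
  have V0_0 : (1 : K) - q * q ^ (j) * b ≠ 0 := by intro h; apply C0; linear_combination h
  have V0_1 : (1 : K) - q * b * q ^ (j) ≠ 0 := by intro h; apply C0; linear_combination h
  have V1_0 : (1 : K) - q * q ^ (m) * b ≠ 0 := by intro h; apply C3; linear_combination h
  have V1_1 : (1 : K) - q * b * q ^ (m) ≠ 0 := by intro h; apply C3; linear_combination h
  have V2_0 : (1 : K) - q * q ^ (m + 1) * b ≠ 0 := by intro h; apply C4; linear_combination h
  have V2_1 : (1 : K) - q * b * q ^ (m + 1) ≠ 0 := by intro h; apply C4; linear_combination h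
  field_simp

set_option maxHeartbeats 1000000 in
lemma key_e1 {K : Type*} [Field K] (b q A1 A2 A3 A4 A5 A6 : K) (j m : ℕ)
    (hq0 : q ≠ 0) (hb1 : 1 - b * q ≠ 0) (hb2 : 1 - b * q ^ 2 ≠ 0)
    (h1 : A1 ≠ 0) (h2 : A2 ≠ 0) (h4 : A4 ≠ 0) (h5 : A5 ≠ 0)
    (B0 : 1 - q * q ^ j ≠ 0) (B1 : 1 - q * q ^ m ≠ 0)
    (C0 : 1 - b * q * q ^ j ≠ 0) (C1 : 1 - b * q * q ^ (j + 1) ≠ 0)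
    (C2 : 1 - b * q * q ^ (j + 2) ≠ 0) (C3 : 1 - b * q * q ^ m ≠ 0)
    (C4 : 1 - b * q * q ^ (m + 1) ≠ 0) :
    A3 * (1 - q * q ^ (j + m)) / (A1 * (1 - q * q ^ j) * A2) * (A6 * (1 - b * q * q ^ (j + m)) * (1 - b * q * q ^ (j + m + 1)) * (1 - b * q * q ^ (j + m + 2)) / ((1 - b * q) * (1 - b * q ^ 2)) / (A4 * (1 - b * q * q ^ j) * (1 - b * q * q ^ (j + 1)) * (1 - b * q * q ^ (j + 2)) / ((1 - b * q) * (1 - b * q ^ 2)) * (A5 * (1 - b * q * q ^ m) * (1 - b * q * q ^ (m + 1)) / ((1 - b * q) * (1 - b * q ^ 2))))) * (q ^ ((j + 1) * m))⁻¹ * ((q ^ (j + 1))⁻¹ * ((1 - b * q ^ (j + 1 + 1)) * (1 - b * q ^ (j + 1 + 1 + 1)) / ((1 - b * q) * (1 - b * q ^ 2)))) = (1 - b * q * q ^ (j + m + 2)) * ((1 - q * q ^ m) * (A3 * (1 - q * q ^ (j + m)) * (A6 * (1 - b * q * q ^ (j + m)) * (1 - b * q * q ^ (j + m + 1))) * (q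 ^ ((j + 1) * (m + 1)))⁻¹ / (A1 * (1 - q * q ^ j) * A2 * (1 - q * q ^ m) * A4 * (1 - b * q * q ^ j) * A5 * (1 - b * q * q ^ m) * (1 - b * q * q ^ (m + 1))))) := by
  have V0_0 : (1 : K) - q * q ^ (j) * b ≠ 0 := by intro h; apply C0; linear_combination h
  have V0_1 : (1 : K) - q * b * q ^ (j) ≠ 0 := by intro h; apply C0; linear_combination h
  have V1_0 : (1 : K) - q * q ^ (j + 1) * b ≠ 0 := by intro h; apply C1; linear_combination h
  have V1_1 : (1 : K) - q * b * q ^ (j + 1) ≠ 0 := by intro h; apply C1; linear_combination h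
  have V2_0 : (1 : K) - q * q ^ (j + 2) * b ≠ 0 := by intro h; apply C2; linear_combination h
  have V2_1 : (1 : K) - q * b * q ^ (j + 2) ≠ 0 := by intro h; apply C2; linear_combination h
  have V3_0 : (1 : K) - q * q ^ (m) * b ≠ 0 := by intro h; apply C3; linear_combination h
  have V3_1 : (1 : K) - q * b * q ^ (m) ≠ 0 := by intro h; apply C3; linear_combination h
  have V4_0 : (1 : K) - q * q ^ (m + 1) * b ≠ 0 := by intro h; apply C4; linear_combination h
  have V4_1 : (1 : K) - q * b * q ^ (m + 1) ≠ 0 := by intro h; apply C4; linear_combination h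
  have W1 : (1 : K) - q * b ≠ 0 := by intro h; apply hb1; linear_combination h
  have W2 : (1 : K) - q ^ 2 * b ≠ 0 := by intro h; apply hb2; linear_combination h
  field_simp
  ring

set_option maxHeartbeats 1000000 in
lemma key_e2 {K : Type*} [Field K] (b q A1 A2 A3 A4 A5 A6 : K) (j m : ℕ)
    (hq0 : q ≠ 0) (hb1 : 1 - b * q ≠ 0)
    (h1 : A1 ≠ 0) (h2 : A2 ≠ 0) (h4 : A4 ≠ 0) (h5 : A5 ≠ 0)
    (B0 : 1 - q * q ^ j ≠ 0) (B1 : 1 - q * q ^ m ≠ 0)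
    (C0 : 1 - b * q * q ^ j ≠ 0) (C3 : 1 - b * q * q ^ m ≠ 0)
    (C4 : 1 - b * q * q ^ (m + 1) ≠ 0) :
    A3 * (1 - q * q ^ (j + m)) / (A1 * (A2 * (1 - q * q ^ m))) * (A6 * (1 - b * q * q ^ (j + m)) * (1 - b * q * q ^ (j + m + 1)) / (1 - b * q) / (A4 * (1 - b * q * q ^ j) / (1 - b * q) * (A5 * (1 - b * q * q ^ m) * (1 - b * q * q ^ (m + 1)) / (1 - b * q)))) * (q ^ (j * (m + 1)))⁻¹ = (1 - b * q) * ((1 - q * q ^ j) * ((q * q ^ m) * (A3 * (1 - q * q ^ (j + m)) * (A6 * (1 - b * q * q ^ (j + m)) * (1 - b * q * q ^ (j + m + 1))) * (q ^ ((j + 1) * (m + 1)))⁻¹ / (A1 * (1 - q * q ^ j) * A2 * (1 - q * q ^ m) * A4 * (1 - b * q * q ^ j) * A5 * (1 - b * q * q ^ m) * (1 - b * q * q ^ (m + 1)))))) := by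
  have V0_0 : (1 : K) - q * q ^ (j) * b ≠ 0 := by intro h; apply C0; linear_combination h
  have V0_1 : (1 : K) - q * b * q ^ (j) ≠ 0 := by intro h; apply C0; linear_combination h
  have V1_0 : (1 : K) - q * q ^ (m) * b ≠ 0 := by intro h; apply C3; linear_combination h
  have V1_1 : (1 : K) - q * b * q ^ (m) ≠ 0 := by intro h; apply C3; linear_combination h
  have V2_0 : (1 : K) - q * q ^ (m + 1) * b ≠ 0 := by intro h; apply C4; linear_combination h
  have V2_1 : (1 : K) - q * b * q ^ (m + 1) ≠ 0 := by intro h; apply C4; linear_combination h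
  have W1 : (1 : K) - q * b ≠ 0 := by intro h; apply hb1; linear_combination h
  field_simp
  ring

include hq0 hq1 hbq in
set_option maxHeartbeats 2000000 in
lemma key (σ τ : K →+* K) (hσb : σ b = b * q ^ 2) (hσq : σ q = q)
    (hτb : τ b = b * q) (hτq : τ q = q) (j m : ℕ) :
    qc b q (j + m + 2) (j + 1) =
      σ (qc b q (j + m + 1) (j + 1)) * Bf b q (j + 1) + τ (qc b q (j + m + 1) j) := by
  have hm2 : b * q ^ 2 * q = b * q ^ 3 := by ring
  have hm1 : b * q * q = b * q ^ 2 := by ring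
  simp only [qc, Bf, map_mul, map_div₀, map_zpow₀, map_qPoch, hσb, hσq, hτb, hτq, hm2, hm1]
  rw [show j + m + 2 - (j + 1) = m + 1 by omega, show j + m + 1 - (j + 1) = m by omega,
    show j + m + 1 - j = m + 1 by omega]
  rw [show ((j + 1 : ℕ) : ℤ) * (((j + 1 : ℕ) : ℤ) - ((j + m + 2 : ℕ) : ℤ)) =
      -(((j + 1) * (m + 1) : ℕ) : ℤ) by push_cast; ring]
  rw [show ((j + 1 : ℕ) : ℤ) * (((j + 1 : ℕ) : ℤ) - ((j + m + 1 : ℕ) : ℤ)) =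
      -(((j + 1) * m : ℕ) : ℤ) by push_cast; ring]
  rw [show ((j : ℕ) : ℤ) * (((j : ℕ) : ℤ) - ((j + m + 1 : ℕ) : ℤ)) =
      -((j * (m + 1) : ℕ) : ℤ) by push_cast; ring]
  rw [zpow_neg, zpow_neg, zpow_neg, zpow_natCast, zpow_natCast, zpow_natCast]
  rw [Q3_eq b q hbq, Q3_eq b q hbq, Q3_eq b q hbq, Q2_eq b q hbq, Q2_eq b q hbq, Q2_eq b q hbq]
  rw [show j + m + 2 = j + m + 1 + 1 by omega]
  rw [show j + m + 1 + 2 = j + m + 1 + 1 + 1 by omega]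
  rw [show j + 1 + 2 = j + 1 + 1 + 1 by omega]
  rw [show m + 2 = m + 1 + 1 by omega]
  simp only [qPoch_succ]
  have Hq : ∀ e : ℕ, (1 : K) - q * q ^ e ≠ 0 := fun e => by
    rw [← pow_succ']; exact hqs q hq1 e
  have Hb : ∀ e : ℕ, (1 : K) - b * q * q ^ e ≠ 0 := fun e => by
    rw [mul_assoc, ← pow_succ']; exact hbqn b q hbq (e + 1)
  have h1 : (1 : K) - b * q ≠ 0 := by have := hbqn b q hbq 1; rwa [pow_one] at this
  have h2 : (1 : K) - b * q ^ 2 ≠ 0 := hbqn b q hbq 2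
  have hPj := hP q hq1 j
  have hPm := hP q hq1 m
  have hPn := hP q hq1 (j + m)
  have hQj := hQ b q hbq j
  have hQm := hQ b q hbq m
  have hQn := hQ b q hbq (j + m)
  have B0 := Hq j; have B1 := Hq m; have B2 := Hq (j + m); have B3 := Hq (j + m + 1)
  have C0 := Hb j; have C1 := Hb (j + 1); have C2 := Hb (j + 1 + 1)
  have C2' : (1 : K) - b * q * q ^ (j + 2) ≠ 0 := by have := Hb (j + 2); simpa using this
  have C3 := Hb m; have C4 := Hb (m + 1)
  have C5 := Hb (j + m); have C6 := Hb (j + m + 1); have C7 := Hb (j + m + 1 + 1)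
  generalize qPoch q q j = A1 at hPj ⊢
  generalize qPoch q q m = A2 at hPm ⊢
  generalize qPoch q q (j + m) = A3 at hPn ⊢
  generalize qPoch (b * q) q j = A4 at hQj ⊢
  generalize qPoch (b * q) q m = A5 at hQm ⊢
  generalize qPoch (b * q) q (j + m) = A6 at hQn ⊢
  rw [key_e0 b q A1 A2 A3 A4 A5 A6 j m hq0 hPj hPm hQj hQm B0 B1 C0 C3 C4,
    key_e1 b q A1 A2 A3 A4 A5 A6 j m hq0 h1 h2 hPj hPm hQj hQm B0 B1 C0 C1 C2' C3 C4,
    key_e2 b q A1 A2 A3 A4 A5 A6 j m hq0 h1 hPj hPm hQj hQm B0 B1 C0 C3 C4]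
  have e3 : (1 - q * q ^ (j + m + 1)) * (1 - b * q * q ^ (m + 1)) =
      (1 - b * q * q ^ (j + m + 2)) * (1 - q * q ^ m) + (1 - b * q) * ((1 - q * q ^ j) * (q * q ^ m)) := by
    ring
  linear_combination (A3 * (1 - q * q ^ (j + m)) * (A6 * (1 - b * q * q ^ (j + m)) * (1 - b * q * q ^ (j + m + 1))) * (q ^ ((j + 1) * (m + 1)))⁻¹ / (A1 * (1 - q * q ^ j) * A2 * (1 - q * q ^ m) * A4 * (1 - b * q * q ^ j) * A5 * (1 - b * q * q ^ m) * (1 - b * q * q ^ (m + 1)))) * e3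

end Scalars2

section RingSide

variable {K : Type*} [Field K] {R : Type*} [Ring R]

lemma Bf_zero (b q : K) (h1 : (1 : K) - b * q ≠ 0) (h2 : (1 : K) - b * q ^ 2 ≠ 0) :
    Bf b q 0 = 1 := by
  unfold Bf
  rw [pow_zero, inv_one, one_mul, zero_add, pow_one]
  exact div_self (mul_ne_zero h1 h2)

lemma x_ypow (b q : K) (ι : K →+* R) (x y : R) (τ : K →+* K)
    (hτb : τ b = b * q) (hτq : τ q = q)
    (hy : ∀ f : K, y * ι f = ι (τ f) * y)
    (hq0 : q ≠ 0) (hbq : ∀ m : ℤ, 1 - b * q ^ m ≠ 0)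
    (hyx : y * x = ι (q * (1 - b * q) / (1 - b * q ^ 3)) * (x * y)) :
    ∀ k : ℕ, x * y ^ k = ι (Bf b q k) * (y ^ k * x) := by
  have h1 : (1 : K) - b * q ≠ 0 := by have := hbqn b q hbq 1; rwa [pow_one] at this
  have h2 : (1 : K) - b * q ^ 2 ≠ 0 := hbqn b q hbq 2
  have h3 : (1 : K) - b * q ^ 3 ≠ 0 := hbqn b q hbq 3
  have hα : q * (1 - b * q) / (1 - b * q ^ 3) ≠ 0 :=
    div_ne_zero (mul_ne_zero hq0 h1) h3
  have hxy : x * y = ι (q * (1 - b * q) / (1 - b * q ^ 3))⁻¹ * (y * x) := by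
    rw [hyx, ← mul_assoc, ← map_mul, inv_mul_cancel₀ hα, map_one, one_mul]
  intro k
  induction k with
  | zero => rw [pow_zero, Bf_zero b q h1 h2, map_one, one_mul, one_mul, mul_one]
  | succ k ih =>
    conv_lhs => rw [pow_succ' y k]
    calc x * (y * y ^ k) = (x * y) * y ^ k := by rw [mul_assoc]
      _ = ι (q * (1 - b * q) / (1 - b * q ^ 3))⁻¹ * (y * (x * y ^ k)) := by
          rw [hxy, mul_assoc, mul_assoc]
      _ = ι (q * (1 - b * q) / (1 - b * q ^ 3))⁻¹ * (y * (ι (Bf b q k) * (y ^ k * x))) := by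
          rw [ih]
      _ = ι (q * (1 - b * q) / (1 - b * q ^ 3))⁻¹ * ((ι (τ (Bf b q k)) * y) * (y ^ k * x)) := by
          rw [← mul_assoc y, hy]
      _ = (ι (q * (1 - b * q) / (1 - b * q ^ 3))⁻¹ * ι (τ (Bf b q k))) * (y * (y ^ k * x)) := by
          rw [mul_assoc (ι (τ (Bf b q k))) y (y ^ k * x), ← mul_assoc]
      _ = ι (Bf b q (k + 1)) * (y ^ (k + 1) * x) := by
          rw [← map_mul, Bf_succ b q hq0 hbq τ hτb hτq k, pow_succ' y k, mul_assoc]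

lemma expansion (b q : K) (ι : K →+* R) (x y : R) (σ τ : K →+* K)
    (hσb : σ b = b * q ^ 2) (hσq : σ q = q)
    (hτb : τ b = b * q) (hτq : τ q = q)
    (hx : ∀ f : K, x * ι f = ι (σ f) * x)
    (hy : ∀ f : K, y * ι f = ι (τ f) * y)
    (hq0 : q ≠ 0) (hq1 : ∀ m : ℕ, q ^ (m + 1) ≠ 1)
    (hbq : ∀ m : ℤ, 1 - b * q ^ m ≠ 0)
    (hyx : y * x = ι (q * (1 - b * q) / (1 - b * q ^ 3)) * (x * y)) :
    ∀ n : ℕ, (x + y) ^ n =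
      ∑ k ∈ Finset.range (n + 1), ι (qc b q n k) * y ^ k * x ^ (n - k) := by
  intro n
  induction n with
  | zero =>
    rw [pow_zero, Finset.sum_range_one, qc_zero b q hq1 hbq 0, map_one]
    simp
  | succ n ih =>
    rw [pow_succ' (x + y) n, ih, add_mul, Finset.mul_sum, Finset.mul_sum]
    have hX : ∀ k ∈ Finset.range (n + 1),
        x * (ι (qc b q n k) * y ^ k * x ^ (n - k)) =
          ι (σ (qc b q n k) * Bf b q k) * y ^ k * x ^ (n + 1 - k) := by
      intro k hk
      have hk' : k ≤ n := Nat.lt_succ_iff.mp (Finset.mem_range.mp hk)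
      rw [Nat.succ_sub hk', ← mul_assoc, ← mul_assoc, hx (qc b q n k),
        mul_assoc (ι (σ (qc b q n k))) x (y ^ k),
        x_ypow b q ι x y τ hτb hτq hy hq0 hbq hyx k,
        ← mul_assoc (ι (σ (qc b q n k))) (ι (Bf b q k)) (y ^ k * x), ← map_mul,
        mul_assoc (ι (σ (qc b q n k) * Bf b q k)) (y ^ k * x) (x ^ (n - k)),
        mul_assoc (y ^ k) x (x ^ (n - k)), ← pow_succ' x (n - k), ← mul_assoc]
    have hY : ∀ k ∈ Finset.range (n + 1),
        y * (ι (qc b q n k) * y ^ k * x ^ (n - k)) =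
          ι (τ (qc b q n k)) * y ^ (k + 1) * x ^ (n - k) := by
      intro k hk
      rw [← mul_assoc, ← mul_assoc, hy (qc b q n k),
        mul_assoc (ι (τ (qc b q n k))) y (y ^ k), ← pow_succ' y k]
    rw [Finset.sum_congr rfl hX, Finset.sum_congr rfl hY]
    have h1 : (1 : K) - b * q ≠ 0 := by have := hbqn b q hbq 1; rwa [pow_one] at this
    have h2 : (1 : K) - b * q ^ 2 ≠ 0 := hbqn b q hbq 2
    rw [Finset.sum_range_succ'
      (fun k => ι (qc b q (n + 1) k) * y ^ k * x ^ (n + 1 - k)) (n + 1)]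
    rw [Finset.sum_range_succ'
      (fun k => ι (σ (qc b q n k) * Bf b q k) * y ^ k * x ^ (n + 1 - k)) n]
    rw [Finset.sum_range_succ
      (fun k => ι (τ (qc b q n k)) * y ^ (k + 1) * x ^ (n - k)) n]
    rw [Finset.sum_range_succ
      (fun k => ι (qc b q (n + 1) (k + 1)) * y ^ (k + 1) * x ^ (n + 1 - (k + 1))) n]
    simp only [Nat.succ_sub_succ_eq_sub, Nat.sub_self, Nat.sub_zero, pow_zero, mul_one, one_mul]
    have hmid : (∑ k ∈ Finset.range n,
          ι (σ (qc b q n (k + 1)) * Bf b q (k + 1)) * y ^ (k + 1) * x ^ (n - k)) +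
        (∑ k ∈ Finset.range n, ι (τ (qc b q n k)) * y ^ (k + 1) * x ^ (n - k)) =
        ∑ k ∈ Finset.range n, ι (qc b q (n + 1) (k + 1)) * y ^ (k + 1) * x ^ (n - k) := by
      rw [← Finset.sum_add_distrib]
      apply Finset.sum_congr rfl
      intro k hk
      have hkn : k < n := Finset.mem_range.mp hk
      have hkey := key b q hq0 hq1 hbq σ τ hσb hσq hτb hτq k (n - 1 - k)
      rw [show k + (n - 1 - k) + 2 = n + 1 by omega, show k + (n - 1 - k) + 1 = n by omega]
        at hkey
      rw [hkey, map_add, add_mul, add_mul]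
    have hg0 : ι (σ (qc b q n 0) * Bf b q 0) * x ^ (n + 1) =
        ι (qc b q (n + 1) 0) * x ^ (n + 1) := by
      rw [qc_zero b q hq1 hbq, qc_zero b q hq1 hbq, map_one, Bf_zero b q h1 h2, mul_one,
        map_one]
    have hhn : ι (τ (qc b q n n)) * y ^ (n + 1) =
        ι (qc b q (n + 1) (n + 1)) * y ^ (n + 1) := by
      rw [qc_self b q hq1 hbq, qc_self b q hq1 hbq, map_one, map_one]
    rw [← hmid]
    rw [hg0, hhn]
    abel

end RingSide

end Stmt9


/-- In `ℂ_{0,b;q}[x,y]` the symmetric normal-ordering expansion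
`(x+y)^n = ∑_{k=0}^n [(q;q)_n/((q;q)_k(q;q)_{n-k})]·[(bq;q)_n/((bq;q)_k(bq;q)_{n-k})]·
q^{k(k-n)} y^k x^{n-k}` holds. -/
theorem stmt9 {K R : Type*} [Field K] [Ring R] (b q : K) (ι : K →+* R) (x y : R)
    (σ τ : K →+* K)
    (hσb : σ b = b * q ^ 2) (hσq : σ q = q)
    (hτb : τ b = b * q) (hτq : τ q = q)
    (hx : ∀ f : K, x * ι f = ι (σ f) * x)
    (hy : ∀ f : K, y * ι f = ι (τ f) * y)
    (hq0 : q ≠ 0) (hq1 : ∀ m : ℕ, q ^ (m + 1) ≠ 1)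
    (hbq : ∀ m : ℤ, 1 - b * q ^ m ≠ 0)
    (hyx : y * x = ι (q * (1 - b * q) / (1 - b * q ^ 3)) * (x * y))
    (n : ℕ) :
    (x + y) ^ n = ∑ k ∈ Finset.range (n + 1),
      ι (qPoch q q n / (qPoch q q k * qPoch q q (n - k)) *
          (qPoch (b * q) q n / (qPoch (b * q) q k * qPoch (b * q) q (n - k))) *
          q ^ ((k : ℤ) * ((k : ℤ) - (n : ℤ)))) *
        y ^ k * x ^ (n - k) := by
  have h := Stmt9.expansion b q ι x y σ τ hσb hσq hτb hτq hx hy hq0 hq1 hbq hyx n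
  simpa only [Stmt9.qc] using h
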